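/- arXiv:2504.03204 — 2 statements merged into one kernel-verified Lean document; each statement's English description precedes it below -/
import Mathlib

section
/- Let n ≥ 2, let F₀ ∈ S^n_+, and define F = {X ∈ S^n_+ : ⟨F₀,X⟩ = 0} and L₁(F) = {u ∈ ℝ^{n-1} : F₀·(u;1) = 0}. Let B, B' ∈ S^n. If L₁(F) ∩ B_≤ is nonempty and L₁(F) ∩ B_≤ ⊆ L₁(F) ∩ B'_≥, then F ∩ J_-(B) ⊆ F ∩ J_+(B'); in particular F ∩ J_0(B) ⊆ F ∩ J_+(B'). -/
open Matrix

noncomputable section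

/-- `q(u,A) = (u;1)ᵀ A (u;1)`. -/
def qf {m : ℕ} (A : Matrix (Fin (m+1)) (Fin (m+1)) ℝ) (u : Fin m → ℝ) : ℝ :=
  dotProduct (Fin.snoc u 1) (A.mulVec (Fin.snoc u 1))

/-- Auxiliary quadratic form `x ⬝ᵥ M x`. -/
def Qd {n : ℕ} (M : Matrix (Fin n) (Fin n) ℝ) (x : Fin n → ℝ) : ℝ :=
  dotProduct x (M.mulVec x)

lemma Qd_smul_add_smul {n : ℕ} (M : Matrix (Fin n) (Fin n) ℝ) (x y : Fin n → ℝ) (a b : ℝ) :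
    Qd M (a • x + b • y) =
      a^2 * Qd M x + a*b*(dotProduct x (M.mulVec y) + dotProduct y (M.mulVec x))
        + b^2 * Qd M y := by
  simp only [Qd, Matrix.mulVec_add, Matrix.mulVec_smul, dotProduct_add,
    add_dotProduct, dotProduct_smul, smul_dotProduct, smul_eq_mul]
  ring

lemma Qd_smul {n : ℕ} (M : Matrix (Fin n) (Fin n) ℝ) (x : Fin n → ℝ) (a : ℝ) :
    Qd M (a • x) = a^2 * Qd M x := by
  have := Qd_smul_add_smul M x 0 a 0
  simpa [Qd] using this

/-- roots of a quadratic with positive value at `0` and negative leading coefficient. -/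
lemma exists_quad_root (a b c : ℝ) (ha : 0 < a) (hc : c < 0) :
    ∃ t : ℝ, a + b*t + c*t^2 = 0 := by
  have hd : 0 ≤ b^2 - 4*a*c := by nlinarith
  refine ⟨(-b + Real.sqrt (b^2 - 4*a*c)) / (2*c), ?_⟩
  have hs := Real.sq_sqrt hd
  have hc' : (2:ℝ)*c ≠ 0 := by intro h; nlinarith
  have hc0 : c ≠ 0 := by intro h; nlinarith
  have key : a + b*((-b + Real.sqrt (b^2 - 4*a*c)) / (2*c))
      + c*((-b + Real.sqrt (b^2 - 4*a*c)) / (2*c))^2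
      = a + (Real.sqrt (b^2 - 4*a*c)^2 - b^2)/(4*c) := by field_simp; ring
  rw [key, hs]; field_simp; ring

/-- a downward parabola is eventually negative. -/
lemma exists_quad_neg (a b c : ℝ) (hc : c < 0) :
    ∃ T : ℝ, 0 ≤ T ∧ a + |b| * T + c * T^2 < 0 := by
  set T := max 1 ((|a| + |b| + 1)/(-c)) with hT
  have h1 : (1:ℝ) ≤ T := le_max_left _ _
  have h2 : (|a| + |b| + 1)/(-c) ≤ T := le_max_right _ _
  have h3 : |a| + |b| + 1 ≤ T * (-c) := by
    rw [div_le_iff₀ (by linarith)] at h2; exact h2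
  refine ⟨T, by linarith, ?_⟩
  nlinarith [le_abs_self a, abs_nonneg a, abs_nonneg b,
    mul_le_mul_of_nonneg_right h3 (le_trans zero_le_one h1)]

section main

variable {m : ℕ} (F0 B B' : Matrix (Fin (m+1)) (Fin (m+1)) ℝ)

/-- Pointwise statement on the kernel of `F0`. -/
lemma pointwise
    (hne : {u : Fin m → ℝ | F0.mulVec (Fin.snoc u 1) = 0 ∧ qf B u ≤ 0}.Nonempty)
    (hsub : {u : Fin m → ℝ | F0.mulVec (Fin.snoc u 1) = 0 ∧ qf B u ≤ 0} ⊆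
            {u : Fin m → ℝ | F0.mulVec (Fin.snoc u 1) = 0 ∧ 0 ≤ qf B' u}) :
    ∀ x : Fin (m+1) → ℝ, F0.mulVec x = 0 → Qd B x ≤ 0 → 0 ≤ Qd B' x := by
  intro x hxK hxB
  by_cases hs : x (Fin.last m) = 0
  · -- the "vector at infinity" case
    obtain ⟨u₀, hu₀K, hu₀B⟩ := hne
    set e : Fin (m+1) → ℝ := Fin.snoc u₀ 1 with he
    set x' : Fin m → ℝ := fun i => x i.castSucc with hx'
    have hline : ∀ t : ℝ, (Fin.snoc (u₀ + t • x') 1 : Fin (m+1) → ℝ) = e + t • x := by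
      intro t; funext j
      refine Fin.lastCases ?_ ?_ j
      · simp [he, hs]
      · intro i; simp [he, hx', mul_comm]
    set a := Qd B e with hadef
    set b := dotProduct e (B.mulVec x) + dotProduct x (B.mulVec e) with hbdef
    set c := Qd B x with hcdef
    set a' := Qd B' e with ha'def
    set b' := dotProduct e (B'.mulVec x) + dotProduct x (B'.mulVec e) with hb'def
    set c' := Qd B' x with hc'def
    have hq : ∀ t : ℝ, Qd B (e + t • x) = a + b*t + c*t^2 := by
      intro t
      have h := Qd_smul_add_smul B e x 1 t
      simp only [one_smul] at h
      rw [h, hadef, hbdef, hcdef]; ring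
    have hq' : ∀ t : ℝ, Qd B' (e + t • x) = a' + b'*t + c'*t^2 := by
      intro t
      have h := Qd_smul_add_smul B' e x 1 t
      simp only [one_smul] at h
      rw [h, ha'def, hb'def, hc'def]; ring
    have ha : a ≤ 0 := hu₀B
    have hcle : c ≤ 0 := hxB
    have hKt : ∀ t : ℝ, F0.mulVec (Fin.snoc (u₀ + t • x') 1) = 0 := by
      intro t
      rw [hline t]
      rw [Matrix.mulVec_add, Matrix.mulVec_smul, hu₀K, hxK]
      simp
    have himp : ∀ t : ℝ, b * t ≤ 0 → 0 ≤ a' + b' * t + c' * t^2 := by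
      intro t hbt
      have hqB : qf B (u₀ + t • x') ≤ 0 := by
        show Qd B (Fin.snoc (u₀ + t • x') 1) ≤ 0
        rw [hline t, hq t]
        have : c * t^2 ≤ 0 := mul_nonpos_of_nonpos_of_nonneg hcle (sq_nonneg t)
        linarith
      have h1 := (hsub ⟨hKt t, hqB⟩).2
      have h2 : qf B' (u₀ + t • x') = a' + b' * t + c' * t^2 := by
        show Qd B' (Fin.snoc (u₀ + t • x') 1) = _
        rw [hline t, hq' t]
      rw [h2] at h1
      exact h1
    by_contra hcon
    push_neg at hcon
    obtain ⟨T, hT0, hTneg⟩ := exists_quad_neg a' b' c' hcon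
    set t : ℝ := if 0 ≤ b then -T else T with ht
    have hbt : b * t ≤ 0 := by
      by_cases hb : 0 ≤ b
      · simp only [ht, if_pos hb]
        exact mul_nonpos_of_nonneg_of_nonpos hb (by linarith)
      · simp only [ht, if_neg hb]
        exact mul_nonpos_of_nonpos_of_nonneg (by linarith) hT0
    have ht2 : t^2 = T^2 := by
      by_cases hb : 0 ≤ b <;> simp [ht, hb]
    have hb't : b' * t ≤ |b'| * T := by
      calc b' * t ≤ |b' * t| := le_abs_self _
        _ = |b'| * |t| := abs_mul _ _
        _ = |b'| * T := by
            congr 1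
            by_cases hb : 0 ≤ b <;> simp [ht, hb, abs_of_nonneg hT0]
    have := himp t hbt
    rw [ht2] at this
    linarith
  · -- last coordinate nonzero: rescale
    set s := x (Fin.last m) with hsdef
    set u : Fin m → ℝ := fun i => x i.castSucc / s with hu
    have hx : x = s • (Fin.snoc u 1 : Fin (m+1) → ℝ) := by
      funext j
      refine Fin.lastCases ?_ ?_ j
      · simp [hsdef]
      · intro i
        simp only [Pi.smul_apply, Fin.snoc_castSucc, hu, smul_eq_mul]
        field_simp
    have hK : F0.mulVec (Fin.snoc u 1) = 0 := by
      have : F0.mulVec x = s • F0.mulVec (Fin.snoc u 1) := by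
        rw [hx, Matrix.mulVec_smul]
      rw [this] at hxK
      rcases smul_eq_zero.mp hxK with h | h
      · exact absurd h hs
      · exact h
    have hs2 : 0 < s^2 := by positivity
    have hqB : qf B u ≤ 0 := by
      have : Qd B x = s^2 * Qd B (Fin.snoc u 1) := by rw [hx, Qd_smul]
      rw [this] at hxB
      have : Qd B (Fin.snoc u 1) ≤ 0 := nonpos_of_mul_nonpos_right ?_ hs2
      · exact this
      · linarith [hxB]
    have := (hsub ⟨hK, hqB⟩).2
    have hq' : Qd B' x = s^2 * Qd B' (Fin.snoc u 1) := by rw [hx, Qd_smul]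
    rw [hq']
    exact mul_nonneg (le_of_lt hs2) this

/-- Sturm-type rank-one mixing induction: from the pointwise statement to sums. -/
lemma sum_version
    (hpt : ∀ x : Fin (m+1) → ℝ, F0.mulVec x = 0 → Qd B x ≤ 0 → 0 ≤ Qd B' x) :
    ∀ (N : ℕ) (v : Fin (m+1) → (Fin (m+1) → ℝ)),
      (Finset.univ.filter (fun i => Qd B (v i) ≠ 0)).card ≤ N →
      (∀ i, F0.mulVec (v i) = 0) →
      (∑ i, Qd B (v i)) ≤ 0 → 0 ≤ ∑ i, Qd B' (v i) := by
  intro N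
  induction N with
  | zero =>
    intro v hcard hK hsum
    have hall : ∀ i, Qd B (v i) = 0 := by
      intro i
      by_contra hne
      have : i ∈ Finset.univ.filter (fun i => Qd B (v i) ≠ 0) := by
        simp [hne]
      have := Finset.card_pos.mpr ⟨i, this⟩
      omega
    exact Finset.sum_nonneg fun i _ => hpt (v i) (hK i) (le_of_eq (hall i))
  | succ N ih =>
    intro v hcard hK hsum
    by_cases hpos : ∀ i, Qd B (v i) ≤ 0
    · exact Finset.sum_nonneg fun i _ => hpt (v i) (hK i) (hpos i)
    push_neg at hpos
    obtain ⟨i, hi⟩ := hpos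
    have hj : ∃ j, Qd B (v j) < 0 := by
      by_contra hcon
      push_neg at hcon
      have := Finset.single_le_sum (f := fun k => Qd B (v k)) (fun k _ => hcon k)
        (Finset.mem_univ i)
      linarith
    obtain ⟨j, hj⟩ := hj
    have hij : i ≠ j := by intro h; rw [h] at hi; linarith
    set x := v i with hxv
    set y := v j with hyv
    set β := dotProduct x (B.mulVec y) + dotProduct y (B.mulVec x) with hβ
    obtain ⟨t, ht⟩ := exists_quad_root (Qd B x) β (Qd B y) hi hj
    set d := Real.sqrt (1 + t^2) with hd
    have hd2 : d^2 = 1 + t^2 := Real.sq_sqrt (by positivity)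
    have hdpos : 0 < d := Real.sqrt_pos.mpr (by positivity)
    set w : Fin (m+1) → ℝ := d⁻¹ • (x + t • y) with hw
    set z : Fin (m+1) → ℝ := d⁻¹ • (t • x + (-1 : ℝ) • y) with hz
    -- key identity: for any M, Qd M w + Qd M z = Qd M x + Qd M y
    have hkey : ∀ M : Matrix (Fin (m+1)) (Fin (m+1)) ℝ,
        Qd M w + Qd M z = Qd M x + Qd M y := by
      intro M
      have h1 : Qd M (x + t • y) = Qd M x
          + (dotProduct x (M.mulVec y) + dotProduct y (M.mulVec x)) * t
          + Qd M y * t^2 := by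
        have h := Qd_smul_add_smul M x y 1 t
        simp only [one_smul] at h
        rw [h]; ring
      have h2 : Qd M (t • x + (-1 : ℝ) • y) = t^2 * Qd M x
          - (dotProduct x (M.mulVec y) + dotProduct y (M.mulVec x)) * t
          + Qd M y := by
        have := Qd_smul_add_smul M x y t (-1)
        rw [this]; ring
      have hinv : (d⁻¹)^2 = (1 + t^2)⁻¹ := by
        rw [← hd2]; rw [inv_pow]
      rw [hw, hz, Qd_smul, Qd_smul, h1, h2, hinv]
      have hne : (1 : ℝ) + t^2 ≠ 0 := by positivity
      field_simp
      ring
    have hQBw : Qd B w = 0 := by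
      have h1 : Qd B (x + t • y) = Qd B x + β * t + Qd B y * t^2 := by
        have h := Qd_smul_add_smul B x y 1 t
        simp only [one_smul] at h
        rw [h, hβ]; ring
      rw [hw, Qd_smul, h1]
      rw [show Qd B x + β * t + Qd B y * t^2 = 0 by linarith [ht]]
      ring
    set v' := Function.update (Function.update v i w) j z with hv'
    have hv'i : v' i = w := by
      rw [hv', Function.update_of_ne hij, Function.update_self]
    have hv'j : v' j = z := by
      rw [hv', Function.update_self]
    have hv'k : ∀ k, k ≠ i → k ≠ j → v' k = v k := by
      intro k hki hkj
      rw [hv', Function.update_of_ne hkj, Function.update_of_ne hki]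
    -- sums are preserved
    have hsumeq : ∀ M : Matrix (Fin (m+1)) (Fin (m+1)) ℝ,
        (∑ k, Qd M (v' k)) = ∑ k, Qd M (v k) := by
      intro M
      have hjmem : j ∈ (Finset.univ : Finset (Fin (m+1))) := Finset.mem_univ j
      have himem : i ∈ (Finset.univ : Finset (Fin (m+1))).erase j :=
        Finset.mem_erase.mpr ⟨hij, Finset.mem_univ i⟩
      rw [← Finset.add_sum_erase _ (fun k => Qd M (v' k)) hjmem,
          ← Finset.add_sum_erase _ (fun k => Qd M (v' k)) himem,
          ← Finset.add_sum_erase _ (fun k => Qd M (v k)) hjmem,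
          ← Finset.add_sum_erase _ (fun k => Qd M (v k)) himem]
      have hcong : ∑ k ∈ ((Finset.univ.erase j).erase i), Qd M (v' k)
          = ∑ k ∈ ((Finset.univ.erase j).erase i), Qd M (v k) := by
        refine Finset.sum_congr rfl fun k hk => ?_
        have hk1 := Finset.mem_erase.mp hk
        have hk2 := Finset.mem_erase.mp hk1.2
        rw [hv'k k hk1.1 hk2.1]
      rw [hcong, hv'i, hv'j]
      have := hkey M
      linarith
    -- kernel membership preserved
    have hK' : ∀ k, F0.mulVec (v' k) = 0 := by
      intro k
      by_cases hkj : k = j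
      · rw [hkj, hv'j, hz]
        rw [Matrix.mulVec_smul, Matrix.mulVec_add, Matrix.mulVec_smul, Matrix.mulVec_smul,
          hK i, hK j]
        simp
      by_cases hki : k = i
      · rw [hki, hv'i, hw]
        rw [Matrix.mulVec_smul, Matrix.mulVec_add, Matrix.mulVec_smul, hK i, hK j]
        simp
      · rw [hv'k k hki hkj]; exact hK k
    -- cardinality decreases
    have hcard' : (Finset.univ.filter (fun k => Qd B (v' k) ≠ 0)).card ≤ N := by
      have hsubset : Finset.univ.filter (fun k => Qd B (v' k) ≠ 0) ⊆
          (Finset.univ.filter (fun k => Qd B (v k) ≠ 0)).erase i := by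
        intro k hk
        rw [Finset.mem_filter] at hk
        have hki : k ≠ i := by
          intro h
          rw [h, hv'i, hQBw] at hk
          exact hk.2 rfl
        rw [Finset.mem_erase, Finset.mem_filter]
        refine ⟨hki, Finset.mem_univ k, ?_⟩
        by_cases hkj : k = j
        · rw [hkj]; exact ne_of_lt hj
        · rw [← hv'k k hki hkj]; exact hk.2
      have himem : i ∈ Finset.univ.filter (fun k => Qd B (v k) ≠ 0) := by
        simp only [Finset.mem_filter]
        exact ⟨Finset.mem_univ i, ne_of_gt hi⟩
      have := Finset.card_le_card hsubset
      rw [Finset.card_erase_of_mem himem] at this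
      omega
    have hsum' : (∑ k, Qd B (v' k)) ≤ 0 := by rw [hsumeq B]; exact hsum
    have := ih v' hcard' hK' hsum'
    rw [hsumeq B'] at this
    exact this

end main

/-- Lemma 3.1, [ARIMA2024, Lemma 4.3].  Matrices have size `n = m+1`
with `m ≥ 1`, i.e. `n ≥ 2`. -/
theorem stmt_3 (m : ℕ) (hm : 1 ≤ m)
    (F0 B B' : Matrix (Fin (m+1)) (Fin (m+1)) ℝ)
    (hF0 : F0.PosSemidef) (hBsym : B.IsSymm) (hB'sym : B'.IsSymm)
    (hne : {u : Fin m → ℝ | F0.mulVec (Fin.snoc u 1) = 0 ∧ qf B u ≤ 0}.Nonempty)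
    (hsub : {u : Fin m → ℝ | F0.mulVec (Fin.snoc u 1) = 0 ∧ qf B u ≤ 0} ⊆
            {u : Fin m → ℝ | F0.mulVec (Fin.snoc u 1) = 0 ∧ 0 ≤ qf B' u}) :
    ({X : Matrix (Fin (m+1)) (Fin (m+1)) ℝ | X.PosSemidef ∧ (F0 * X).trace = 0} ∩
        {X | X.PosSemidef ∧ (B * X).trace ≤ 0} ⊆
      {X | X.PosSemidef ∧ (F0 * X).trace = 0} ∩
        {X | X.PosSemidef ∧ 0 ≤ (B' * X).trace}) ∧
    ({X : Matrix (Fin (m+1)) (Fin (m+1)) ℝ | X.PosSemidef ∧ (F0 * X).trace = 0} ∩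
        {X | X.PosSemidef ∧ (B * X).trace = 0} ⊆
      {X | X.PosSemidef ∧ (F0 * X).trace = 0} ∩
        {X | X.PosSemidef ∧ 0 ≤ (B' * X).trace}) := by
  have hpt := pointwise F0 B B' hne hsub
  have main : ({X : Matrix (Fin (m+1)) (Fin (m+1)) ℝ | X.PosSemidef ∧ (F0 * X).trace = 0} ∩
        {X | X.PosSemidef ∧ (B * X).trace ≤ 0} ⊆
      {X | X.PosSemidef ∧ (F0 * X).trace = 0} ∩
        {X | X.PosSemidef ∧ 0 ≤ (B' * X).trace}) := by
    rintro X ⟨⟨hXpsd, hXF⟩, ⟨-, hXB⟩⟩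
    refine ⟨⟨hXpsd, hXF⟩, hXpsd, ?_⟩
    -- decompose X using its psd square root
    obtain ⟨C, hXCC⟩ : ∃ C : Matrix (Fin (m+1)) (Fin (m+1)) ℝ, X = Cᵀ * C := by
      open scoped MatrixOrder in
      obtain ⟨C, hC⟩ := CStarAlgebra.nonneg_iff_eq_star_mul_self.mp hXpsd.nonneg
      exact ⟨C, by rw [hC, Matrix.star_eq_conjTranspose,
        Matrix.conjTranspose_eq_transpose_of_trivial]⟩
    have htr : ∀ M : Matrix (Fin (m+1)) (Fin (m+1)) ℝ,
        (M * X).trace = ∑ i, Qd M (fun j => C i j) := by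
      intro M
      rw [hXCC, ← mul_assoc, Matrix.trace_mul_cycle]
      rw [Matrix.trace]
      refine Finset.sum_congr rfl fun i _ => ?_
      simp only [Matrix.diag_apply, Matrix.mul_apply, Matrix.transpose_apply, Qd,
        dotProduct, Matrix.mulVec, Finset.sum_mul, Finset.mul_sum]
      rw [Finset.sum_comm]
      refine Finset.sum_congr rfl fun a _ => Finset.sum_congr rfl fun b _ => ?_
      ring
    -- rows of C are in the kernel of F0
    have hrowsK : ∀ i, F0.mulVec (fun j => C i j) = 0 := by
      have hsum0 : ∑ i, Qd F0 (fun j => C i j) = 0 := by rw [← htr F0]; exact hXF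
      have hnn : ∀ i ∈ Finset.univ, 0 ≤ Qd F0 (fun j => C i j) := by
        intro i _
        have := hF0.dotProduct_mulVec_nonneg (fun j => C i j)
        simpa [Qd] using this
      intro i
      have hzero := (Finset.sum_eq_zero_iff_of_nonneg hnn).mp hsum0 i (Finset.mem_univ i)
      have := (hF0.dotProduct_mulVec_zero_iff (fun j => C i j)).mp (by simpa [Qd] using hzero)
      exact this
    have hBle : ∑ i, Qd B (fun j => C i j) ≤ 0 := by rw [← htr B]; exact hXB
    have := sum_version F0 B B' hpt
      ((Finset.univ.filter (fun i => Qd B (fun j => C i j) ≠ 0)).card)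
      (fun i => fun j => C i j) le_rfl hrowsK hBle
    rw [htr B']
    exact this
  refine ⟨main, ?_⟩
  rintro X ⟨h1, ⟨hpsd, htr0⟩⟩
  exact main ⟨h1, ⟨hpsd, le_of_eq htr0⟩⟩
end
end

section
/- Let n ≥ 3 and define B^1, B^2 ∈ S^n by their quadratic forms: xᵀ·B^1·x = −x_1·x_n + Σ_{i=2}^{n-1}(x_i − x_1)^2 + 2·x_n^2 and xᵀ·B^2·x = Σ_{i=1}^{n-1}(x_i − x_n)^2 − x_n^2 for every x ∈ ℝ^n. Then: (a) for k = 1, 2, every x ∈ ℝ^n with xᵀ·B^k·x = 0 satisfies x ∈ ℝ^n_+ ∪ (−ℝ^n_+), and consequently J_0(B^k) ⊆ CP^n; (b) J_0(B^1) ⊆ J_+(B^2) and J_0(B^2) ⊆ J_+(B^1). -/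
open Matrix

noncomputable section

/-- The completely positive cone `CP^n`. -/
def CP (n : ℕ) : Set (Matrix (Fin n) (Fin n) ℝ) :=
  convexHull ℝ {X | ∃ x : Fin n → ℝ, 0 ≤ x ∧ X = vecMulVec x x}

open scoped Pointwise


-- trace lemma
lemma trace_mul_vecMulVec {n : ℕ} (B : Matrix (Fin n) (Fin n) ℝ) (v : Fin n → ℝ) :
    (B * vecMulVec v v).trace = dotProduct v (B.mulVec v) := by
  simp only [Matrix.trace, Matrix.diag, Matrix.mul_apply, Matrix.vecMulVec_apply,
    dotProduct, Matrix.mulVec, Finset.mul_sum]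
  exact Finset.sum_congr rfl fun j _ => Finset.sum_congr rfl fun k _ => by ring

lemma psd_decomp {n : ℕ} {X : Matrix (Fin n) (Fin n) ℝ} (hX : X.PosSemidef) :
    ∃ v : Fin n → Fin n → ℝ, X = ∑ i, vecMulVec (v i) (v i) := by
  obtain ⟨C, rfl⟩ : ∃ C : Matrix (Fin n) (Fin n) ℝ, X = Cᴴ * C := by
    open scoped MatrixOrder in exact CStarAlgebra.nonneg_iff_eq_star_mul_self.mp hX.nonneg
  refine ⟨fun i => C i, ?_⟩
  ext a b
  simp [Matrix.mul_apply, Matrix.conjTranspose_apply, Matrix.vecMulVec_apply, Matrix.sum_apply]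

lemma qf_expand {n : ℕ} (B : Matrix (Fin n) (Fin n) ℝ) (a b : ℝ) (x y : Fin n → ℝ) :
    dotProduct (a • x + b • y) (B.mulVec (a • x + b • y)) =
      a^2 * dotProduct x (B.mulVec x) + a*b*dotProduct x (B.mulVec y)
      + a*b*dotProduct y (B.mulVec x) + b^2 * dotProduct y (B.mulVec y) := by
  simp only [Matrix.mulVec_add, Matrix.mulVec_smul, dotProduct_add,
    dotProduct_smul, add_dotProduct, smul_dotProduct, smul_eq_mul]
  ring

lemma qf_neg {n : ℕ} (B : Matrix (Fin n) (Fin n) ℝ) (x : Fin n → ℝ) :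
    dotProduct (-x) (B.mulVec (-x)) = dotProduct x (B.mulVec x) := by
  simp [Matrix.mulVec_neg, dotProduct_neg, neg_dotProduct]

lemma vecMulVec_rot {n : ℕ} {c s : ℝ} (h : c^2 + s^2 = 1) (x y : Fin n → ℝ) :
    vecMulVec (c • x + s • y) (c • x + s • y) + vecMulVec ((-s) • x + c • y) ((-s) • x + c • y)
      = vecMulVec x x + vecMulVec y y := by
  ext a b
  simp only [Matrix.add_apply, Matrix.vecMulVec_apply, Pi.add_apply, Pi.smul_apply, smul_eq_mul]
  linear_combination (x a * x b + y a * y b) * h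
lemma exists_rot {n : ℕ} (B : Matrix (Fin n) (Fin n) ℝ) (x y : Fin n → ℝ)
    (hx : 0 < dotProduct x (B.mulVec x)) (hy : dotProduct y (B.mulVec y) < 0) :
    ∃ c s : ℝ, c^2 + s^2 = 1 ∧
      dotProduct (c • x + s • y) (B.mulVec (c • x + s • y)) = 0 := by
  obtain ⟨A, hA⟩ : ∃ a, dotProduct x (B.mulVec x) = a := ⟨_, rfl⟩
  obtain ⟨D1, hD1⟩ : ∃ a, dotProduct x (B.mulVec y) = a := ⟨_, rfl⟩
  obtain ⟨D2, hD2⟩ : ∃ a, dotProduct y (B.mulVec x) = a := ⟨_, rfl⟩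
  obtain ⟨E, hE⟩ : ∃ a, dotProduct y (B.mulVec y) = a := ⟨_, rfl⟩
  rw [hA] at hx; rw [hE] at hy
  set f : ℝ → ℝ := fun t => (Real.cos t)^2 * A + (Real.cos t * Real.sin t) * (D1 + D2)
    + (Real.sin t)^2 * E with hf
  have hcont : Continuous f := by fun_prop
  have h0 : f 0 = A := by simp [hf]
  have hpi : f (Real.pi/2) = E := by simp [hf]
  have hsub : Set.Icc (f (Real.pi/2)) (f 0) ⊆ f '' (Set.Icc 0 (Real.pi/2)) :=
    intermediate_value_Icc' (by positivity) hcont.continuousOn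
  have h0mem : (0:ℝ) ∈ Set.Icc (f (Real.pi/2)) (f 0) := by
    constructor
    · rw [hpi]; exact hy.le
    · rw [h0]; exact hx.le
  obtain ⟨t, -, ht⟩ := hsub h0mem
  refine ⟨Real.cos t, Real.sin t, by rw [Real.cos_sq_add_sin_sq], ?_⟩
  rw [qf_expand, hA, hD1, hD2, hE]
  simp only [hf] at ht
  linarith [ht]

lemma sum_update_pair {α M : Type*} [AddCommMonoid M] {N : ℕ}
    (v : Fin N → α) {i j : Fin N} (hij : i ≠ j) (a b : α) (g : α → M)
    (hg : g a + g b = g (v i) + g (v j)) :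
    ∑ k, g (Function.update (Function.update v i a) j b k) = ∑ k, g (v k) := by
  classical
  have key : ∀ (u : Fin N → α), ∑ k, g (u k)
      = g (u i) + g (u j) + ∑ k ∈ (Finset.univ.erase i).erase j, g (u k) := by
    intro u
    rw [← Finset.add_sum_erase _ _ (Finset.mem_univ i)]
    rw [← Finset.add_sum_erase _ _ (Finset.mem_erase.mpr ⟨hij.symm, Finset.mem_univ j⟩)]
    rw [Finset.erase_right_comm]
    abel
  rw [key, key v]
  have h1 : Function.update (Function.update v i a) j b i = a := by
    rw [Function.update_of_ne hij, Function.update_self]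
  have h2 : Function.update (Function.update v i a) j b j = b := Function.update_self _ _ _
  rw [h1, h2]
  have h3 : ∀ k ∈ (Finset.univ.erase i).erase j,
      Function.update (Function.update v i a) j b k = v k := by
    intro k hk
    simp only [Finset.mem_erase] at hk
    rw [Function.update_of_ne hk.1, Function.update_of_ne hk.2.1]
  rw [Finset.sum_congr rfl fun k hk => by rw [h3 k hk], hg]

lemma rotate_to_zero {n : ℕ} (B : Matrix (Fin n) (Fin n) ℝ) :
    ∀ (k : ℕ) {N : ℕ} (v : Fin N → Fin n → ℝ),
      (Finset.univ.filter (fun i => dotProduct (v i) (B.mulVec (v i)) ≠ 0)).card ≤ k →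
      (∑ i, dotProduct (v i) (B.mulVec (v i))) = 0 →
      ∃ w : Fin N → Fin n → ℝ,
        (∑ i, vecMulVec (w i) (w i)) = ∑ i, vecMulVec (v i) (v i) ∧
        ∀ i, dotProduct (w i) (B.mulVec (w i)) = 0 := by
  classical
  intro k
  induction k with
  | zero =>
    intro N v hcard _
    refine ⟨v, rfl, fun i => ?_⟩
    by_contra h
    have : i ∈ Finset.univ.filter (fun i => dotProduct (v i) (B.mulVec (v i)) ≠ 0) :=
      Finset.mem_filter.mpr ⟨Finset.mem_univ _, h⟩
    have := Finset.card_pos.mpr ⟨i, this⟩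
    omega
  | succ k ih =>
    intro N v hcard hsum
    by_cases hall : ∀ i, dotProduct (v i) (B.mulVec (v i)) = 0
    · exact ⟨v, rfl, hall⟩
    push_neg at hall
    -- find a positive and a negative index
    have hpair : ∃ i j : Fin N, i ≠ j ∧ 0 < dotProduct (v i) (B.mulVec (v i)) ∧
        dotProduct (v j) (B.mulVec (v j)) < 0 := by
      obtain ⟨i0, hi0⟩ := hall
      have hex : (∃ i, 0 < dotProduct (v i) (B.mulVec (v i))) ∧
          (∃ j, dotProduct (v j) (B.mulVec (v j)) < 0) := by
        constructor
        · by_contra h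
          push_neg at h
          have hlt : (∑ i, dotProduct (v i) (B.mulVec (v i))) <
              ∑ _i : Fin N, (0:ℝ) :=
            Finset.sum_lt_sum (fun i _ => h i)
              ⟨i0, Finset.mem_univ i0, lt_of_le_of_ne (h i0) hi0⟩
          rw [Finset.sum_const, smul_zero] at hlt
          linarith [hsum ▸ hlt]
        · by_contra h
          push_neg at h
          have hlt : (∑ _i : Fin N, (0:ℝ)) <
              ∑ i, dotProduct (v i) (B.mulVec (v i)) :=
            Finset.sum_lt_sum (fun i _ => h i)
              ⟨i0, Finset.mem_univ i0, lt_of_le_of_ne (h i0) (Ne.symm hi0)⟩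
          rw [Finset.sum_const, smul_zero] at hlt
          linarith [hsum ▸ hlt]
      obtain ⟨⟨i, hi⟩, ⟨j, hj⟩⟩ := hex
      exact ⟨i, j, fun h => by rw [h] at hi; linarith, hi, hj⟩
    obtain ⟨i, j, hij, hqi, hqj⟩ := hpair
    obtain ⟨c, s, hcs, hzero⟩ := exists_rot B (v i) (v j) hqi hqj
    set wi := c • v i + s • v j with hwi
    set wj := (-s) • v i + c • v j with hwj
    set w := Function.update (Function.update v i wi) j wj with hw
    have hwival : w i = wi := by rw [hw, Function.update_of_ne hij, Function.update_self]
    have hwjval : w j = wj := by rw [hw]; exact Function.update_self _ _ _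
    have hqsum : dotProduct wi (B.mulVec wi) + dotProduct wj (B.mulVec wj)
        = dotProduct (v i) (B.mulVec (v i)) + dotProduct (v j) (B.mulVec (v j)) := by
      rw [hwi, hwj, qf_expand, qf_expand]
      linear_combination (dotProduct (v i) (B.mulVec (v i))
        + dotProduct (v j) (B.mulVec (v j))) * hcs
    have hvvsum : (∑ k', vecMulVec (w k') (w k')) = ∑ k', vecMulVec (v k') (v k') :=
      sum_update_pair v hij wi wj (fun x => vecMulVec x x)
        (by rw [hwi, hwj]; exact vecMulVec_rot hcs (v i) (v j))
    have hqsum' : (∑ k', dotProduct (w k') (B.mulVec (w k'))) = 0 := by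
      rw [sum_update_pair v hij wi wj (fun x => dotProduct x (B.mulVec x)) hqsum]
      exact hsum
    have hsubset : (Finset.univ.filter
          (fun k' => dotProduct (w k') (B.mulVec (w k')) ≠ 0)) ⊆
        (Finset.univ.filter
          (fun k' => dotProduct (v k') (B.mulVec (v k')) ≠ 0)).erase i := by
      intro k' hk'
      simp only [Finset.mem_filter, Finset.mem_univ, true_and] at hk'
      by_cases hki : k' = i
      · exfalso; rw [hki, hwival] at hk'; exact hk' hzero
      by_cases hkj : k' = j
      · subst hkj
        exact Finset.mem_erase.mpr ⟨hij.symm,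
          Finset.mem_filter.mpr ⟨Finset.mem_univ _, ne_of_lt hqj⟩⟩
      · have : w k' = v k' := by
          rw [hw, Function.update_of_ne hkj, Function.update_of_ne hki]
        refine Finset.mem_erase.mpr ⟨hki, Finset.mem_filter.mpr ⟨Finset.mem_univ _, ?_⟩⟩
        rwa [this] at hk'
    have hcard' : (Finset.univ.filter
        (fun k' => dotProduct (w k') (B.mulVec (w k')) ≠ 0)).card ≤ k := by
      have h1 := Finset.card_le_card hsubset
      have h2 : i ∈ Finset.univ.filter
          (fun k' => dotProduct (v k') (B.mulVec (v k')) ≠ 0) :=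
        Finset.mem_filter.mpr ⟨Finset.mem_univ _, ne_of_gt hqi⟩
      have h3 := Finset.card_erase_of_mem h2
      have h4 := Finset.card_pos.mpr ⟨i, h2⟩
      omega
    obtain ⟨w', hw'1, hw'2⟩ := ih w hcard' hqsum'
    exact ⟨w', by rw [hw'1, hvvsum], hw'2⟩

lemma decomp_zero {n : ℕ} (B : Matrix (Fin n) (Fin n) ℝ) {X : Matrix (Fin n) (Fin n) ℝ}
    (hX : X.PosSemidef) (htr : (B * X).trace = 0) :
    ∃ w : Fin n → Fin n → ℝ, X = ∑ i, vecMulVec (w i) (w i) ∧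
      ∀ i, dotProduct (w i) (B.mulVec (w i)) = 0 := by
  classical
  obtain ⟨v, hv⟩ := psd_decomp hX
  have htr' : (∑ i, dotProduct (v i) (B.mulVec (v i))) = 0 := by
    rw [← htr, hv, Finset.mul_sum, Matrix.trace_sum]
    exact (Finset.sum_congr rfl fun i _ => (trace_mul_vecMulVec B (v i)).symm)
  obtain ⟨w, hw1, hw2⟩ := rotate_to_zero B _ v le_rfl htr'
  exact ⟨w, by rw [hv, hw1], hw2⟩

lemma trace_decomp {n : ℕ} (B : Matrix (Fin n) (Fin n) ℝ) {N : ℕ} (w : Fin N → Fin n → ℝ) :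
    (B * ∑ i, vecMulVec (w i) (w i)).trace
      = ∑ i, dotProduct (w i) (B.mulVec (w i)) := by
  rw [Finset.mul_sum, Matrix.trace_sum]
  exact Finset.sum_congr rfl fun i _ => trace_mul_vecMulVec B (w i)

lemma vecMulVec_neg_neg {n : ℕ} (x : Fin n → ℝ) : vecMulVec (-x) (-x) = vecMulVec x x := by
  ext a b; simp [Matrix.vecMulVec_apply]

lemma mem_CP_of_decomp {n N : ℕ} (u : Fin N → Fin n → ℝ)
    (hu : ∀ i, 0 ≤ u i ∨ u i ≤ 0) :
    (∑ i, vecMulVec (u i) (u i)) ∈ CP n := by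
  classical
  set s : Set (Matrix (Fin n) (Fin n) ℝ) := {X | ∃ x : Fin n → ℝ, 0 ≤ x ∧ X = vecMulVec x x}
    with hs
  have hsmul : ∀ (t : ℝ), 0 ≤ t → ∀ Y ∈ convexHull ℝ s, t • Y ∈ convexHull ℝ s := by
    intro t ht Y hY
    have hsub : t • s ⊆ s := by
      rintro Z ⟨W, ⟨x, hx, rfl⟩, rfl⟩
      refine ⟨Real.sqrt t • x, smul_nonneg (Real.sqrt_nonneg t) hx, ?_⟩
      ext a b
      simp only [Matrix.smul_apply, Matrix.vecMulVec_apply, Pi.smul_apply, smul_eq_mul]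
      rw [show Real.sqrt t * x a * (Real.sqrt t * x b)
        = (Real.sqrt t * Real.sqrt t) * (x a * x b) by ring, Real.mul_self_sqrt ht]
    have h2 : t • Y ∈ t • convexHull ℝ s := Set.smul_mem_smul_set hY
    rw [← convexHull_smul] at h2
    exact convexHull_mono hsub h2
  have hadd : ∀ Y Z, Y ∈ convexHull ℝ s → Z ∈ convexHull ℝ s →
      Y + Z ∈ convexHull ℝ s := by
    intro Y Z hY hZ
    have hmid : (1/2 : ℝ) • Y + (1/2 : ℝ) • Z ∈ convexHull ℝ s :=
      (convex_convexHull ℝ s) hY hZ (by norm_num) (by norm_num) (by norm_num)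
    have := hsmul 2 (by norm_num) _ hmid
    rwa [smul_add, smul_smul, smul_smul, show (2:ℝ) * (1/2) = 1 by norm_num, one_smul,
      one_smul] at this
  have hzero : (0 : Matrix (Fin n) (Fin n) ℝ) ∈ convexHull ℝ s := by
    refine subset_convexHull ℝ s ⟨0, le_rfl, ?_⟩
    ext a b; simp [Matrix.vecMulVec_apply]
  refine Finset.sum_induction _ (· ∈ convexHull ℝ s) hadd hzero fun i _ => ?_
  refine subset_convexHull ℝ s ?_
  rcases hu i with h | h
  · exact ⟨u i, h, rfl⟩
  · exact ⟨-(u i), neg_nonneg.mpr h, (vecMulVec_neg_neg (u i)).symm⟩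


lemma zero_ne_last (m : ℕ) : (0 : Fin (m+3)) ≠ Fin.last (m+2) := by
  simp [Fin.ext_iff, Fin.last]

-- B1 sign, positive last case
lemma signB1_pos (m : ℕ) (x : Fin (m+3) → ℝ)
    (h : -(x 0 * x (Fin.last (m+2))) +
      (∑ i ∈ Finset.univ \ {0, Fin.last (m+2)}, (x i - x 0) ^ 2) +
      2 * (x (Fin.last (m+2))) ^ 2 = 0)
    (hl : 0 < x (Fin.last (m+2))) : 0 ≤ x := by
  set l := Fin.last (m+2) with hldef
  set S := ∑ i ∈ Finset.univ \ {0, l}, (x i - x 0) ^ 2 with hSdef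
  have hS : 0 ≤ S := Finset.sum_nonneg fun i _ => sq_nonneg _
  have hx0 : 2 * x l ≤ x 0 := by nlinarith
  intro i
  by_cases hi0 : i = 0
  · rw [hi0]; show (0:ℝ) ≤ x 0; linarith
  by_cases hil : i = l
  · rw [hil]; exact hl.le
  have hmem : i ∈ Finset.univ \ {0, l} := by
    simp [Finset.mem_sdiff, hi0, hil]
  have hterm : (x i - x 0) ^ 2 ≤ S :=
    Finset.single_le_sum (f := fun j => (x j - x 0)^2) (fun j _ => sq_nonneg _) hmem
  show (0:ℝ) ≤ x i
  nlinarith [sq_nonneg (x 0 - 2 * x l), sq_nonneg (2 * x 0 - x l), sq_nonneg (x i)]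

-- B2 sign, positive last case
lemma signB2_pos (m : ℕ) (x : Fin (m+3) → ℝ)
    (h : (∑ i ∈ Finset.univ \ {Fin.last (m+2)}, (x i - x (Fin.last (m+2))) ^ 2) -
      (x (Fin.last (m+2))) ^ 2 = 0)
    (hl : 0 < x (Fin.last (m+2))) : 0 ≤ x := by
  set l := Fin.last (m+2) with hldef
  intro i
  by_cases hil : i = l
  · rw [hil]; exact hl.le
  have hmem : i ∈ Finset.univ \ {l} := by simp [hil]
  have hterm : (x i - x l) ^ 2 ≤ ∑ i ∈ Finset.univ \ {l}, (x i - x l) ^ 2 :=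
    Finset.single_le_sum (f := fun j => (x j - x l)^2) (fun j _ => sq_nonneg _) hmem
  show (0:ℝ) ≤ x i
  nlinarith

lemma rhs1_even (m : ℕ) (x : Fin (m+3) → ℝ) :
    -((-x) 0 * (-x) (Fin.last (m+2))) +
      (∑ i ∈ Finset.univ \ {0, Fin.last (m+2)}, ((-x) i - (-x) 0) ^ 2) +
      2 * ((-x) (Fin.last (m+2))) ^ 2 =
    -(x 0 * x (Fin.last (m+2))) +
      (∑ i ∈ Finset.univ \ {0, Fin.last (m+2)}, (x i - x 0) ^ 2) +
      2 * (x (Fin.last (m+2))) ^ 2 := by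
  simp only [Pi.neg_apply]
  rw [Finset.sum_congr rfl (fun i _ => show (-x i - -x 0)^2 = (x i - x 0)^2 by ring)]
  ring

lemma rhs2_even (m : ℕ) (x : Fin (m+3) → ℝ) :
    (∑ i ∈ Finset.univ \ {Fin.last (m+2)}, ((-x) i - (-x) (Fin.last (m+2))) ^ 2) -
      ((-x) (Fin.last (m+2))) ^ 2 =
    (∑ i ∈ Finset.univ \ {Fin.last (m+2)}, (x i - x (Fin.last (m+2))) ^ 2) -
      (x (Fin.last (m+2))) ^ 2 := by
  simp only [Pi.neg_apply]
  rw [Finset.sum_congr rfl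
    (fun i _ => show (-x i - -x (Fin.last (m+2)))^2 = (x i - x (Fin.last (m+2)))^2 by ring)]
  ring

lemma signB1 (m : ℕ) (x : Fin (m+3) → ℝ)
    (h : -(x 0 * x (Fin.last (m+2))) +
      (∑ i ∈ Finset.univ \ {0, Fin.last (m+2)}, (x i - x 0) ^ 2) +
      2 * (x (Fin.last (m+2))) ^ 2 = 0) : 0 ≤ x ∨ x ≤ 0 := by
  rcases lt_trichotomy (x (Fin.last (m+2))) 0 with hneg | hzero | hpos
  · right
    have h' := (rhs1_even m x).trans h
    have := signB1_pos m (-x) h' (by simpa using hneg)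
    intro i
    simpa using this i
  · have hS : (∑ i ∈ Finset.univ \ {0, Fin.last (m+2)}, (x i - x 0) ^ 2) = 0 := by
      rw [hzero] at h; linarith [h]
    have heach := (Finset.sum_eq_zero_iff_of_nonneg
      (fun i _ => sq_nonneg (x i - x 0))).mp hS
    have hval : ∀ i, i ∈ Finset.univ \ {0, Fin.last (m+2)} → x i = x 0 := by
      intro i hi
      have := heach i hi
      have := pow_eq_zero_iff (n := 2) (by norm_num) |>.mp this
      linarith [this]
    rcases le_or_gt 0 (x 0) with h0 | h0
    · left; intro i
      by_cases hi0 : i = 0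
      · rw [hi0]; exact h0
      by_cases hil : i = Fin.last (m+2)
      · show (0:ℝ) ≤ x i; rw [hil, hzero]
      · rw [hval i (by simp [hi0, hil])]; exact h0
    · right; intro i
      by_cases hi0 : i = 0
      · rw [hi0]; exact h0.le
      by_cases hil : i = Fin.last (m+2)
      · show x i ≤ (0:ℝ); rw [hil, hzero]
      · rw [hval i (by simp [hi0, hil])]; exact h0.le
  · exact Or.inl (signB1_pos m x h hpos)

lemma signB2 (m : ℕ) (x : Fin (m+3) → ℝ)
    (h : (∑ i ∈ Finset.univ \ {Fin.last (m+2)}, (x i - x (Fin.last (m+2))) ^ 2) -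
      (x (Fin.last (m+2))) ^ 2 = 0) : 0 ≤ x ∨ x ≤ 0 := by
  rcases lt_trichotomy (x (Fin.last (m+2))) 0 with hneg | hzero | hpos
  · right
    have h' := (rhs2_even m x).trans h
    have := signB2_pos m (-x) h' (by simpa using hneg)
    intro i
    simpa using this i
  · have hS : (∑ i ∈ Finset.univ \ {Fin.last (m+2)}, (x i - x (Fin.last (m+2))) ^ 2) = 0 := by
      have h2 : (∑ i ∈ Finset.univ \ {Fin.last (m+2)}, (x i - x (Fin.last (m+2))) ^ 2)
          = (x (Fin.last (m+2)))^2 := by linarith [h]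
      rw [h2, hzero]; ring
    have heach := (Finset.sum_eq_zero_iff_of_nonneg
      (fun i _ => sq_nonneg (x i - x (Fin.last (m+2))))).mp hS
    left
    intro i
    by_cases hil : i = Fin.last (m+2)
    · show (0:ℝ) ≤ x i; rw [hil, hzero]
    · have := heach i (by simp [hil])
      have := pow_eq_zero_iff (n := 2) (by norm_num) |>.mp this
      rw [hzero] at this
      show (0:ℝ) ≤ x i
      linarith [this]
  · exact Or.inl (signB2_pos m x h hpos)

-- q1(x)=0, x nonneg ⟹ q2(x) ≥ 0
lemma crossB1B2_pos (m : ℕ) (x : Fin (m+3) → ℝ)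
    (h : -(x 0 * x (Fin.last (m+2))) +
      (∑ i ∈ Finset.univ \ {0, Fin.last (m+2)}, (x i - x 0) ^ 2) +
      2 * (x (Fin.last (m+2))) ^ 2 = 0)
    (hx : 0 ≤ x) :
    0 ≤ (∑ i ∈ Finset.univ \ {Fin.last (m+2)}, (x i - x (Fin.last (m+2))) ^ 2) -
      (x (Fin.last (m+2))) ^ 2 := by
  have hl : 0 ≤ x (Fin.last (m+2)) := hx _
  have hS : 0 ≤ ∑ i ∈ Finset.univ \ {0, Fin.last (m+2)}, (x i - x 0) ^ 2 :=
    Finset.sum_nonneg fun i _ => sq_nonneg _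
  have hx0 : 2 * x (Fin.last (m+2)) * x (Fin.last (m+2)) ≤ x 0 * x (Fin.last (m+2)) := by
    nlinarith
  have hmem : (0 : Fin (m+3)) ∈ Finset.univ \ {Fin.last (m+2)} := by
    simp [zero_ne_last m]
  have hterm : (x 0 - x (Fin.last (m+2))) ^ 2 ≤
      ∑ i ∈ Finset.univ \ {Fin.last (m+2)}, (x i - x (Fin.last (m+2))) ^ 2 :=
    Finset.single_le_sum (f := fun j => (x j - x (Fin.last (m+2)))^2)
      (fun j _ => sq_nonneg _) hmem
  rcases eq_or_lt_of_le hl with hzero | hpos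
  · nlinarith [Finset.sum_nonneg (s := Finset.univ \ {Fin.last (m+2)})
      (f := fun i => (x i - x (Fin.last (m+2)))^2) (fun i _ => sq_nonneg _)]
  · have h2xl : 2 * x (Fin.last (m+2)) ≤ x 0 := by nlinarith
    nlinarith

-- q2(x)=0, x nonneg ⟹ q1(x) ≥ 0
lemma crossB2B1_pos (m : ℕ) (x : Fin (m+3) → ℝ)
    (h : (∑ i ∈ Finset.univ \ {Fin.last (m+2)}, (x i - x (Fin.last (m+2))) ^ 2) -
      (x (Fin.last (m+2))) ^ 2 = 0)
    (hx : 0 ≤ x) :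
    0 ≤ -(x 0 * x (Fin.last (m+2))) +
      (∑ i ∈ Finset.univ \ {0, Fin.last (m+2)}, (x i - x 0) ^ 2) +
      2 * (x (Fin.last (m+2))) ^ 2 := by
  have hl : 0 ≤ x (Fin.last (m+2)) := hx _
  have h0 : 0 ≤ x 0 := hx _
  have hS : 0 ≤ ∑ i ∈ Finset.univ \ {0, Fin.last (m+2)}, (x i - x 0) ^ 2 :=
    Finset.sum_nonneg fun i _ => sq_nonneg _
  have hmem : (0 : Fin (m+3)) ∈ Finset.univ \ {Fin.last (m+2)} := by
    simp [zero_ne_last m]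
  have hterm : (x 0 - x (Fin.last (m+2))) ^ 2 ≤
      ∑ i ∈ Finset.univ \ {Fin.last (m+2)}, (x i - x (Fin.last (m+2))) ^ 2 :=
    Finset.single_le_sum (f := fun j => (x j - x (Fin.last (m+2)))^2)
      (fun j _ => sq_nonneg _) hmem
  have key : x 0 * x (Fin.last (m+2)) ≤ 2 * (x (Fin.last (m+2)))^2 := by
    nlinarith [sq_nonneg (x 0 - 2 * x (Fin.last (m+2))), mul_nonneg h0 hl]
  linarith

lemma crossB1B2 (m : ℕ) (x : Fin (m+3) → ℝ)
    (h : -(x 0 * x (Fin.last (m+2))) +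
      (∑ i ∈ Finset.univ \ {0, Fin.last (m+2)}, (x i - x 0) ^ 2) +
      2 * (x (Fin.last (m+2))) ^ 2 = 0) :
    0 ≤ (∑ i ∈ Finset.univ \ {Fin.last (m+2)}, (x i - x (Fin.last (m+2))) ^ 2) -
      (x (Fin.last (m+2))) ^ 2 := by
  rcases signB1 m x h with hpos | hneg
  · exact crossB1B2_pos m x h hpos
  · have h' := (rhs1_even m x).trans h
    have := crossB1B2_pos m (-x) h' (by intro i; simpa using hneg i)
    rwa [rhs2_even m x] at this

lemma crossB2B1 (m : ℕ) (x : Fin (m+3) → ℝ)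
    (h : (∑ i ∈ Finset.univ \ {Fin.last (m+2)}, (x i - x (Fin.last (m+2))) ^ 2) -
      (x (Fin.last (m+2))) ^ 2 = 0) :
    0 ≤ -(x 0 * x (Fin.last (m+2))) +
      (∑ i ∈ Finset.univ \ {0, Fin.last (m+2)}, (x i - x 0) ^ 2) +
      2 * (x (Fin.last (m+2))) ^ 2 := by
  rcases signB2 m x h with hpos | hneg
  · exact crossB2B1_pos m x h hpos
  · have h' := (rhs2_even m x).trans h
    have := crossB2B1_pos m (-x) h' (by intro i; simpa using hneg i)
    rwa [rhs1_even m x] at this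

/-- Example 5.1.  The matrix size is `n = m+3 ≥ 3`; the index `1`
of the paper corresponds to `0 : Fin (m+3)` and the index `n` to `Fin.last (m+2)`;
the sums are over `i = 2, …, n−1` and `i = 1, …, n−1` respectively. -/
theorem stmt_17 (m : ℕ) (B1 B2 : Matrix (Fin (m+3)) (Fin (m+3)) ℝ)
    (hB1sym : B1.IsSymm) (hB2sym : B2.IsSymm)
    (hB1 : ∀ x : Fin (m+3) → ℝ, dotProduct x (B1.mulVec x) =
      -(x 0 * x (Fin.last (m+2))) +
      (∑ i ∈ Finset.univ \ {0, Fin.last (m+2)}, (x i - x 0) ^ 2) +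
      2 * (x (Fin.last (m+2))) ^ 2)
    (hB2 : ∀ x : Fin (m+3) → ℝ, dotProduct x (B2.mulVec x) =
      (∑ i ∈ Finset.univ \ {Fin.last (m+2)}, (x i - x (Fin.last (m+2))) ^ 2) -
      (x (Fin.last (m+2))) ^ 2) :
    ((∀ x : Fin (m+3) → ℝ, dotProduct x (B1.mulVec x) = 0 → (0 ≤ x ∨ x ≤ 0)) ∧
     (∀ x : Fin (m+3) → ℝ, dotProduct x (B2.mulVec x) = 0 → (0 ≤ x ∨ x ≤ 0)) ∧
     {X : Matrix (Fin (m+3)) (Fin (m+3)) ℝ | X.PosSemidef ∧ (B1 * X).trace = 0} ⊆ CP (m+3) ∧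
     {X : Matrix (Fin (m+3)) (Fin (m+3)) ℝ | X.PosSemidef ∧ (B2 * X).trace = 0} ⊆ CP (m+3)) ∧
    ({X : Matrix (Fin (m+3)) (Fin (m+3)) ℝ | X.PosSemidef ∧ (B1 * X).trace = 0} ⊆
        {X | X.PosSemidef ∧ 0 ≤ (B2 * X).trace} ∧
     {X : Matrix (Fin (m+3)) (Fin (m+3)) ℝ | X.PosSemidef ∧ (B2 * X).trace = 0} ⊆
        {X | X.PosSemidef ∧ 0 ≤ (B1 * X).trace}) := by
  have hsign1 : ∀ x : Fin (m+3) → ℝ, dotProduct x (B1.mulVec x) = 0 → (0 ≤ x ∨ x ≤ 0) :=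
    fun x hx => signB1 m x (by rw [← hB1 x]; exact hx)
  have hsign2 : ∀ x : Fin (m+3) → ℝ, dotProduct x (B2.mulVec x) = 0 → (0 ≤ x ∨ x ≤ 0) :=
    fun x hx => signB2 m x (by rw [← hB2 x]; exact hx)
  refine ⟨⟨hsign1, hsign2, ?_, ?_⟩, ?_, ?_⟩
  · rintro X ⟨hpsd, htr⟩
    obtain ⟨w, hXeq, hw⟩ := decomp_zero B1 hpsd htr
    show X ∈ CP (m+3)
    rw [hXeq]
    exact mem_CP_of_decomp w (fun i => hsign1 (w i) (hw i))
  · rintro X ⟨hpsd, htr⟩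
    obtain ⟨w, hXeq, hw⟩ := decomp_zero B2 hpsd htr
    show X ∈ CP (m+3)
    rw [hXeq]
    exact mem_CP_of_decomp w (fun i => hsign2 (w i) (hw i))
  · rintro X ⟨hpsd, htr⟩
    refine ⟨hpsd, ?_⟩
    obtain ⟨w, hXeq, hw⟩ := decomp_zero B1 hpsd htr
    rw [hXeq, trace_decomp]
    refine Finset.sum_nonneg fun i _ => ?_
    rw [hB2]
    exact crossB1B2 m (w i) (by rw [← hB1]; exact hw i)
  · rintro X ⟨hpsd, htr⟩
    refine ⟨hpsd, ?_⟩
    obtain ⟨w, hXeq, hw⟩ := decomp_zero B2 hpsd htr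
    rw [hXeq, trace_decomp]
    refine Finset.sum_nonneg fun i _ => ?_
    rw [hB1]
    exact crossB2B1 m (w i) (by rw [← hB2]; exact hw i)
end
end
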